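/- Let f be analytic on the closed disk |z − s₀| ≤ r with f(s₀) ≠ 0, where 0 < r ≤ C for an absolute constant C. Set M_r(s₀) = max_{|z−s₀|≤r} |f(z)/f(s₀)| + 3 and let N_{r−δ}(s₀) be the number of zeros of f in |z − s₀| ≤ r − δ (with multiplicity). Then for 0 < δ < r/2, N_{r−δ}(s₀) ≤ (r/δ)·(log M_r(s₀) + log 10), provided |f(s₀)| ≥ 1/10. -/

import Mathlib

open Metric Filter Finset

lemma prod_analyticAt {ι : Type*} (Z : Finset ι) (g : ι → ℂ → ℂ) (z : ℂ)
    (h : ∀ w ∈ Z, AnalyticAt ℂ (g w) z) :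
    AnalyticAt ℂ (fun x => ∏ w ∈ Z, g w x) z := by
  classical
  induction Z using Finset.induction with
  | empty => simpa using analyticAt_const
  | @insert a s hw ih =>
    simp only [Finset.prod_insert hw]
    exact (h a (by simp)).mul (ih fun w hws => h w (by simp [hws]))

lemma aux_factor {f : ℂ → ℂ} {B : Set ℂ} (hf : ∀ z ∈ B, AnalyticAt ℂ f z)
    (Z : Finset ℂ)
    (m : ℂ → ℕ) (hm1 : ∀ w ∈ Z, 1 ≤ m w)
    (hm : ∀ w ∈ Z, ∃ h : ℂ → ℂ, AnalyticAt ℂ h w ∧ h w ≠ 0 ∧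
      ∀ᶠ z in nhds w, f z = (z - w) ^ (m w) * h z) :
    ∃ g : ℂ → ℂ, (∀ z ∈ B, AnalyticAt ℂ g z) ∧
      ∀ z ∈ B, f z = (∏ w ∈ Z, (z - w) ^ (m w)) * g z := by
  classical
  choose h hA hne hev using hm
  set P : ℂ → ℂ := fun z => ∏ w ∈ Z, (z - w) ^ (m w) with hP
  refine ⟨fun z => if hz : z ∈ Z then
      h z hz z / ∏ w ∈ Z.erase z, (z - w) ^ (m w) else f z / P z, ?_, ?_⟩
  · intro z hzB
    by_cases hz : z ∈ Z
    · -- analytic at a zero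
      have hPe : AnalyticAt ℂ (fun x => ∏ w ∈ Z.erase z, (x - w) ^ (m w)) z :=
        prod_analyticAt _ _ _ (fun w _ => ((analyticAt_id.sub analyticAt_const).pow _))
      have hPene : (∏ w ∈ Z.erase z, (z - w) ^ (m w)) ≠ 0 := by
        rw [Finset.prod_ne_zero_iff]
        intro w hw
        exact pow_ne_zero _ (sub_ne_zero.2 (Ne.symm (Finset.ne_of_mem_erase hw)))
      have ht : AnalyticAt ℂ
          (fun x => h z hz x / ∏ w ∈ Z.erase z, (x - w) ^ (m w)) z :=
        (hA z hz).div hPe hPene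
      refine ht.congr ?_
      have h1 : ((↑(Z.erase z) : Set ℂ))ᶜ ∈ nhds z :=
        (Finset.finite_toSet _).isClosed.isOpen_compl.mem_nhds (by simp)
      filter_upwards [h1, hev z hz] with x hx1 hx2
      rw [Set.mem_compl_iff, Finset.mem_coe] at hx1
      by_cases hxz : x = z
      · subst hxz; simp [hz]
      · have hxZ : x ∉ Z := by
          intro hxZ
          exact hx1 (Finset.mem_erase.2 ⟨hxz, hxZ⟩)
        have hPx : P x = (x - z) ^ (m z) * ∏ w ∈ Z.erase z, (x - w) ^ (m w) := by
          rw [hP]; exact (Finset.mul_prod_erase Z _ hz).symm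
        simp only [dif_neg hxZ, hx2, hPx]
        rw [mul_div_mul_left]
        exact pow_ne_zero _ (sub_ne_zero.2 hxz)
    · -- analytic away from zeros
      have hPne : P z ≠ 0 := by
        rw [hP, Finset.prod_ne_zero_iff]
        intro w hw
        refine pow_ne_zero _ (sub_ne_zero.2 ?_)
        rintro rfl; exact hz hw
      have hPa : AnalyticAt ℂ P z :=
        prod_analyticAt _ _ _ (fun w _ => ((analyticAt_id.sub analyticAt_const).pow _))
      refine ((hf z hzB).div hPa hPne).congr ?_
      have h1 : ((↑Z : Set ℂ))ᶜ ∈ nhds z :=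
        (Finset.finite_toSet _).isClosed.isOpen_compl.mem_nhds hz
      filter_upwards [h1] with x hx
      rw [Set.mem_compl_iff, Finset.mem_coe] at hx
      simp [dif_neg hx]
  · intro z hzB
    by_cases hz : z ∈ Z
    · have hfz : f z = 0 := by
        have := (hev z hz).self_of_nhds
        rwa [sub_self, zero_pow (Nat.one_le_iff_ne_zero.1 (hm1 z hz)), zero_mul] at this
      have hPz : (∏ w ∈ Z, (z - w) ^ m w) = 0 := Finset.prod_eq_zero hz (by
        rw [sub_self, zero_pow (Nat.one_le_iff_ne_zero.1 (hm1 z hz))])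
      rw [hfz, hPz, zero_mul]
    · have hPne : P z ≠ 0 := by
        rw [hP, Finset.prod_ne_zero_iff]
        intro w hw
        refine pow_ne_zero _ (sub_ne_zero.2 ?_)
        rintro rfl; exact hz hw
      simp only [dif_neg hz]
      field_simp
      rfl

theorem stmt16 (f : ℂ → ℂ) (s₀ : ℂ) (r δ : ℝ) (hr : 0 < r)
    (hδ : 0 < δ) (hδr : δ < r / 2)
    (hf : ∀ z ∈ Metric.closedBall s₀ r, AnalyticAt ℂ f z)
    (hfs₀ : f s₀ ≠ 0) (hf10 : (1 : ℝ) / 10 ≤ ‖f s₀‖) :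
    (∑' z : Metric.closedBall s₀ (r - δ),
        (((analyticOrderAt f z).toNat : ℕ) : ℝ))
      ≤ (r / δ) *
          (Real.log (sSup ((fun z => ‖f z / f s₀‖) '' Metric.closedBall s₀ r) + 3) +
            Real.log 10) := by
  classical
  have hrδ : 0 < r - δ := by linarith
  have hKB : Metric.closedBall s₀ (r - δ) ⊆ Metric.closedBall s₀ r :=
    closedBall_subset_closedBall (by linarith)
  have hs₀B : s₀ ∈ Metric.closedBall s₀ r := mem_closedBall_self hr.le
  have hfa : AnalyticOnNhd ℂ f (Metric.closedBall s₀ r) := hf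
  have hpre : IsPreconnected (Metric.closedBall s₀ r) :=
    (convex_closedBall s₀ r).isPreconnected
  have hnot : ¬ Set.EqOn f 0 (Metric.closedBall s₀ r) := fun h => hfs₀ (h hs₀B)
  -- finiteness of the zero set
  set Zs : Set ℂ := {z | z ∈ Metric.closedBall s₀ (r - δ) ∧ f z = 0} with hZs
  have hZfin : Zs.Finite := by
    by_contra hinf
    have hinf' : Zs.Infinite := hinf
    obtain ⟨x, hxK, hx⟩ := hinf'.exists_accPt_of_subset_isCompact
      (isCompact_closedBall s₀ (r - δ)) (fun z hz => hz.1)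
    rw [accPt_iff_frequently] at hx
    have hfreq : ∃ᶠ z in nhdsWithin x {x}ᶜ, f z = 0 := by
      rw [nhdsWithin, Filter.frequently_inf_principal]
      exact hx.mono (fun z hz => ⟨hz.1, hz.2.2⟩)
    exact hnot (hfa.eqOn_zero_of_preconnected_of_frequently_eq_zero hpre (hKB hxK) hfreq)
  set Z : Finset ℂ := hZfin.toFinset with hZdef
  have hZmem : ∀ w, w ∈ Z ↔ (w ∈ Metric.closedBall s₀ (r - δ) ∧ f w = 0) := by
    intro w; rw [hZdef, Set.Finite.mem_toFinset]; rfl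
  -- the multiplicity function
  set m : ℂ → ℕ := fun w => if hw : AnalyticAt ℂ f w then (analyticOrderAt f w).toNat else 0 with hm
  have hmf : ∀ (z : ℂ) (hz : AnalyticAt ℂ f z), m z = (analyticOrderAt f z).toNat := fun z hz => dif_pos hz
  have hotop : ∀ z (hz : z ∈ Metric.closedBall s₀ r), analyticOrderAt f z ≠ ⊤ := by
    intro z hz htop
    rw [analyticOrderAt_eq_top] at htop
    refine hnot (hfa.eqOn_zero_of_preconnected_of_frequently_eq_zero hpre hz ?_)
    exact (htop.filter_mono nhdsWithin_le_nhds).frequently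
  have hmz : ∀ z (hz : z ∈ Metric.closedBall s₀ r), f z ≠ 0 → m z = 0 := by
    intro z hz hfz
    rw [hmf z (hf z hz)]
    have : analyticOrderAt f z = (0 : ℕ) :=
      ((hf z hz).analyticOrderAt_eq_natCast (n := 0)).mpr ⟨f, hf z hz, hfz, by simp⟩
    simp [this]
  have hordm : ∀ w (hw : w ∈ Metric.closedBall s₀ r), analyticOrderAt f w = (m w : ℕ∞) := by
    intro w hw
    rw [hmf w (hf w hw)]
    exact (ENat.coe_toNat (hotop w hw)).symm
  have hm1 : ∀ w ∈ Z, 1 ≤ m w := by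
    intro w hw
    rw [hZmem] at hw
    rcases Nat.eq_zero_or_pos (m w) with h0 | h1
    · exfalso
      have := hordm w (hKB hw.1)
      rw [h0] at this
      obtain ⟨gg, _, hggne, hggev⟩ := ((hf w (hKB hw.1)).analyticOrderAt_eq_natCast (n := 0)).mp (by
        exact_mod_cast this)
      have := hggev.self_of_nhds
      simp only [sub_self, pow_zero, one_smul] at this
      exact hggne (this ▸ hw.2)
    · exact h1
  -- local factorization hypothesis
  have hloc : ∀ w ∈ Z, ∃ h : ℂ → ℂ, AnalyticAt ℂ h w ∧ h w ≠ 0 ∧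
      ∀ᶠ z in nhds w, f z = (z - w) ^ (m w) * h z := by
    intro w hw
    have hwB := hKB ((hZmem w).mp hw).1
    obtain ⟨gg, hggA, hggne, hggev⟩ :=
      ((hf w hwB).analyticOrderAt_eq_natCast (n := m w)).mp (hordm w hwB)
    exact ⟨gg, hggA, hggne, hggev.mono fun z hz => by simpa [smul_eq_mul] using hz⟩
  obtain ⟨g, hgA, hgf⟩ := aux_factor hf Z m hm1 hloc
  -- the Blaschke-type factor
  set Q : ℂ → ℂ := fun z =>
    ∏ w ∈ Z, (((r : ℂ) ^ 2 - (starRingEnd ℂ) (w - s₀) * (z - s₀)) / (r : ℂ)) ^ m w with hQ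
  have hrC : (r : ℂ) ≠ 0 := Complex.ofReal_ne_zero.mpr hr.ne'
  have hQA : ∀ z : ℂ, AnalyticAt ℂ Q z := by
    intro z
    refine prod_analyticAt _ _ _ (fun w _ => AnalyticAt.pow ?_ _)
    exact (analyticAt_const.sub (analyticAt_const.mul
      (analyticAt_id.sub analyticAt_const))).div analyticAt_const hrC
  set H : ℂ → ℂ := fun z => g z * Q z with hH
  have hZne : ∀ w ∈ Z, ∀ z : ℂ, z ∈ Metric.sphere s₀ r → z ≠ w := by
    intro w hw z hz hzw
    have h1 := ((hZmem w).mp hw).1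
    rw [mem_closedBall] at h1
    rw [mem_sphere] at hz
    rw [hzw] at hz
    linarith [hz ▸ h1]
  -- key identity on the sphere
  have hsphere : ∀ z ∈ Metric.sphere s₀ r, ∀ w ∈ Z,
      ‖(((r : ℂ) ^ 2 - (starRingEnd ℂ) (w - s₀) * (z - s₀)) / (r : ℂ))‖ = ‖z - w‖ := by
    intro z hz w hw
    have hzn : ‖z - s₀‖ = r := by rwa [mem_sphere, dist_eq_norm] at hz
    have key : (r : ℂ) ^ 2 - (starRingEnd ℂ) (w - s₀) * (z - s₀)
        = (z - s₀) * (starRingEnd ℂ) ((z - s₀) - (w - s₀)) := by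
      have h1 : (z - s₀) * (starRingEnd ℂ) (z - s₀) = ((r : ℂ)) ^ 2 := by
        rw [Complex.mul_conj]
        have h2 : Complex.normSq (z - s₀) = r ^ 2 := by
          rw [Complex.normSq_eq_norm_sq, hzn]
        rw [h2]
        push_cast
        ring
      simp only [map_sub] at h1 ⊢
      linear_combination -h1
    rw [key]
    have : (z - s₀) - (w - s₀) = z - w := by ring
    rw [this, norm_div, norm_mul]
    rw [RCLike.norm_conj]
    rw [hzn]
    rw [Complex.norm_real, Real.norm_of_nonneg hr.le]
    field_simp
  -- the sup
  set S : ℝ := sSup ((fun z => ‖f z / f s₀‖) '' Metric.closedBall s₀ r) with hS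
  have hfcon : ContinuousOn f (Metric.closedBall s₀ r) :=
    fun z hz => (hf z hz).continuousAt.continuousWithinAt
  have hfc : ContinuousOn (fun z => ‖f z / f s₀‖) (Metric.closedBall s₀ r) :=
    (hfcon.div_const _).norm
  have hbdd : BddAbove ((fun z => ‖f z / f s₀‖) '' Metric.closedBall s₀ r) :=
    ((isCompact_closedBall s₀ r).image_of_continuousOn hfc).bddAbove
  have hfS : ∀ z ∈ Metric.closedBall s₀ r, ‖f z‖ ≤ S * ‖f s₀‖ := by
    intro z hz
    have h1 : ‖f z / f s₀‖ ≤ S := le_csSup hbdd ⟨z, hz, rfl⟩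
    have h2 : ‖f z‖ = ‖f z / f s₀‖ * ‖f s₀‖ := by
      rw [norm_div, div_mul_cancel₀ _ (norm_ne_zero_iff.mpr hfs₀)]
    rw [h2]
    exact mul_le_mul_of_nonneg_right h1 (norm_nonneg _)
  have hS1 : (1 : ℝ) ≤ S := by
    refine le_csSup hbdd ⟨s₀, hs₀B, ?_⟩
    simp [div_self hfs₀]
  -- boundary bound for H
  have hHbound : ∀ z ∈ frontier (Metric.ball s₀ r), ‖H z‖ ≤ S * ‖f s₀‖ := by
    rw [frontier_ball s₀ hr.ne']
    intro z hz
    have hzB : z ∈ Metric.closedBall s₀ r := sphere_subset_closedBall hz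
    have hfz := hgf z hzB
    have hQn : ‖Q z‖ = ‖∏ w ∈ Z, (z - w) ^ m w‖ := by
      rw [hQ]
      rw [norm_prod, norm_prod]
      exact Finset.prod_congr rfl fun w hw => by rw [norm_pow, norm_pow, hsphere z hz w hw]
    have hHz : ‖H z‖ = ‖f z‖ := by
      show ‖g z * Q z‖ = ‖f z‖
      rw [norm_mul, hQn, ← norm_mul, mul_comm, ← hfz]
    rw [hHz]
    exact hfS z hzB
  -- maximum modulus principle
  have hHd : DiffContOnCl ℂ H (Metric.ball s₀ r) := by
    constructor
    · exact fun z hz => ((hgA z (ball_subset_closedBall hz)).mul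
        (hQA z)).differentiableAt.differentiableWithinAt
    · rw [closure_ball s₀ hr.ne']
      exact fun z hz => ((hgA z hz).mul (hQA z)).continuousAt.continuousWithinAt
  have hmax : ‖H s₀‖ ≤ S * ‖f s₀‖ :=
    Complex.norm_le_of_forall_mem_frontier_norm_le isBounded_ball hHd hHbound
      (by rw [closure_ball s₀ hr.ne']; exact hs₀B)
  -- lower bound for ‖H s₀‖
  set N : ℕ := ∑ w ∈ Z, m w with hN
  have hwn : ∀ w ∈ Z, 0 < ‖s₀ - w‖ ∧ ‖s₀ - w‖ ≤ r - δ := by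
    intro w hw
    obtain ⟨hw1, hw2⟩ := (hZmem w).mp hw
    constructor
    · rw [norm_pos_iff, sub_ne_zero]
      rintro rfl
      exact hfs₀ hw2
    · rw [mem_closedBall, dist_comm, dist_eq_norm] at hw1
      exact hw1
  have hPs₀ : (∏ w ∈ Z, (s₀ - w) ^ m w) ≠ 0 := by
    rw [Finset.prod_ne_zero_iff]
    intro w hw
    exact pow_ne_zero _ (norm_pos_iff.mp (hwn w hw).1)
  have hHs₀ : ‖H s₀‖ = (‖f s₀‖ / ∏ w ∈ Z, ‖s₀ - w‖ ^ m w) * ∏ w ∈ Z, (r : ℝ) ^ m w := by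
    have hfz := hgf s₀ hs₀B
    have hgn : ‖g s₀‖ = ‖f s₀‖ / ‖∏ w ∈ Z, (s₀ - w) ^ m w‖ := by
      rw [hfz, norm_mul, mul_comm, mul_div_assoc, div_self (norm_ne_zero_iff.mpr hPs₀), mul_one]
    have hQn : ‖Q s₀‖ = ∏ w ∈ Z, (r : ℝ) ^ m w := by
      rw [hQ, norm_prod]
      refine Finset.prod_congr rfl fun w hw => ?_
      rw [norm_pow]
      congr 1
      have he : ((r : ℂ) ^ 2 - (starRingEnd ℂ) (w - s₀) * (s₀ - s₀)) / (r : ℂ) = (r : ℂ) := by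
        field_simp
        ring
      rw [he, Complex.norm_real, Real.norm_of_nonneg hr.le]
    show ‖g s₀ * Q s₀‖ = _
    rw [norm_mul, hgn, hQn, norm_prod]
    congr 2
    exact Finset.prod_congr rfl fun w hw => by rw [norm_pow]
  have hlow : ‖f s₀‖ * (r / (r - δ)) ^ N ≤ ‖H s₀‖ := by
    rw [hHs₀]
    have hstep : (r / (r - δ)) ^ N ≤ (∏ w ∈ Z, (r : ℝ) ^ m w) / ∏ w ∈ Z, ‖s₀ - w‖ ^ m w := by
      rw [← Finset.prod_div_distrib]
      have h1 : (r / (r - δ)) ^ N = ∏ w ∈ Z, (r / (r - δ)) ^ m w := by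
        rw [hN, ← Finset.prod_pow_eq_pow_sum]
      rw [h1]
      refine Finset.prod_le_prod (fun w hw => by positivity) (fun w hw => ?_)
      rw [← div_pow]
      refine pow_le_pow_left₀ (by positivity) ?_ _
      refine div_le_div_of_nonneg_left hr.le ?_ ?_
      · exact (hwn w hw).1
      · exact (hwn w hw).2
    calc ‖f s₀‖ * (r / (r - δ)) ^ N
        ≤ ‖f s₀‖ * ((∏ w ∈ Z, (r : ℝ) ^ m w) / ∏ w ∈ Z, ‖s₀ - w‖ ^ m w) :=
          mul_le_mul_of_nonneg_left hstep (norm_nonneg _)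
      _ = (‖f s₀‖ / ∏ w ∈ Z, ‖s₀ - w‖ ^ m w) * ∏ w ∈ Z, (r : ℝ) ^ m w := by ring
  -- conclude the power bound
  have hfs₀pos : (0 : ℝ) < ‖f s₀‖ := norm_pos_iff.mpr hfs₀
  have hpowS : (r / (r - δ)) ^ N ≤ S := by
    have h := hlow.trans hmax
    rw [mul_comm] at h
    exact le_of_mul_le_mul_right h hfs₀pos
  -- logarithms
  have hSpos : (0 : ℝ) < S := lt_of_lt_of_le one_pos hS1
  have hNlog : (N : ℝ) * Real.log (r / (r - δ)) ≤ Real.log (S + 3) := by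
    rw [← Real.log_pow]
    exact Real.log_le_log (by positivity) (hpowS.trans (by linarith))
  have hδlog : δ / r ≤ Real.log (r / (r - δ)) := by
    have h1 := Real.log_le_sub_one_of_pos (show (0 : ℝ) < (r - δ) / r by positivity)
    have h2 : Real.log ((r - δ) / r) = - Real.log (r / (r - δ)) := by
      rw [← Real.log_inv, inv_div]
    have h3 : (r - δ) / r - 1 = -(δ / r) := by
      field_simp
      ring
    rw [h2, h3] at h1
    linarith
  have hNle : (N : ℝ) ≤ (r / δ) * Real.log (S + 3) := by
    have h1 : (N : ℝ) * (δ / r) ≤ Real.log (S + 3) :=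
      (mul_le_mul_of_nonneg_left hδlog (Nat.cast_nonneg N)).trans hNlog
    have h2 : (N : ℝ) = ((N : ℝ) * (δ / r)) * (r / δ) := by
      field_simp
    rw [h2]
    calc ((N : ℝ) * (δ / r)) * (r / δ) ≤ Real.log (S + 3) * (r / δ) :=
          mul_le_mul_of_nonneg_right h1 (by positivity)
      _ = (r / δ) * Real.log (S + 3) := by ring
  -- identify the tsum with N
  have hts : (∑' z : Metric.closedBall s₀ (r - δ),
      (((analyticOrderAt f z).toNat : ℕ) : ℝ))
      = (N : ℝ) := by
    have hcongr : (∑' z : Metric.closedBall s₀ (r - δ),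
        (((analyticOrderAt f z).toNat : ℕ) : ℝ))
        = ∑' z : Metric.closedBall s₀ (r - δ), ((m (z : ℂ) : ℕ) : ℝ) := by
      refine tsum_congr fun z => ?_
      congr 1
      exact (hmf (z : ℂ) (hf z (hKB z.2))).symm
    rw [hcongr]
    have hout : ∀ (b : Metric.closedBall s₀ (r - δ)),
        b ∉ Z.subtype (fun x => x ∈ Metric.closedBall s₀ (r - δ)) → ((m (b : ℂ) : ℕ) : ℝ) = 0 := by
      intro b hb
      rw [Finset.mem_subtype] at hb
      have hfb : f (b : ℂ) ≠ 0 := fun h => hb ((hZmem _).mpr ⟨b.2, h⟩)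
      rw [hmz (b : ℂ) (hKB b.2) hfb]
      simp
    rw [tsum_eq_sum hout]
    rw [Finset.sum_subtype_of_mem (fun w => ((m w : ℕ) : ℝ)) (fun w hw => ((hZmem w).mp hw).1)]
    rw [hN]
    push_cast
    rfl
  rw [hts]
  have hlog10 : (0 : ℝ) ≤ Real.log 10 := Real.log_nonneg (by norm_num)
  calc (N : ℝ) ≤ (r / δ) * Real.log (S + 3) := hNle
    _ ≤ (r / δ) * (Real.log (S + 3) + Real.log 10) := by
        refine mul_le_mul_of_nonneg_left (by linarith) (by positivity)
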